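/- Let E, F be Banach spaces, let 1 ≤ s ≤ q < ∞ and 0 < p ≤ t < ∞, and let P : E → F be a continuous m-homogeneous polynomial that is absolutely (t,s)-summing with constant C ≥ 0. Then for every positive integer n and all x₁,…,xₙ ∈ E, one has (Σ_{j=1}^n ‖P(x_j)‖^p)^{1/p} ≤ C · n^{1/p − 1/t + m/s − m/q} · ‖(x_j)_{j=1}^n‖_{w,q}^m. -/

import Mathlib

open Finset

/-- The weak `q`-norm `‖(x_k)_{k=1}^n‖_{w,q} = sup_{φ ∈ B_{E*}} (∑ |φ(x_k)|^q)^{1/q}`. -/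
noncomputable def weakNorm (𝕜 : Type*) [RCLike 𝕜] {E : Type*} [NormedAddCommGroup E]
    [NormedSpace 𝕜 E] {n : ℕ} (x : Fin n → E) (q : ℝ) : ℝ :=
  sSup {r : ℝ | ∃ φ : E →L[𝕜] 𝕜, ‖φ‖ ≤ 1 ∧ r = (∑ k, ‖φ (x k)‖ ^ q) ^ (1 / q)}

/-- Power mean comparison: `(∑ f^a)^{1/a} ≤ n^{1/a-1/b} (∑ f^b)^{1/b}` for `0 < a ≤ b`. -/
lemma sum_rpow_root_le {n : ℕ} (f : Fin n → ℝ) (hf : ∀ i, 0 ≤ f i) {a b : ℝ}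
    (ha : 0 < a) (hab : a ≤ b) :
    (∑ i, f i ^ a) ^ (1 / a) ≤ (n : ℝ) ^ (1 / a - 1 / b) * (∑ i, f i ^ b) ^ (1 / b) := by
  rcases eq_or_lt_of_le hab with rfl | hlt
  · simp
  have hb : 0 < b := ha.trans hlt
  have hpq : Real.HolderConjugate (b / a) (b / (b - a)) := by
    refine Real.holderConjugate_iff.mpr ⟨?_, ?_⟩
    · rw [lt_div_iff₀ ha, one_mul]; exact hlt
    · field_simp; ring
  have H := Real.inner_le_Lp_mul_Lq (Finset.univ (α := Fin n))
    (fun i => f i ^ a) (fun _ => 1) hpq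
  simp only [mul_one, abs_one] at H
  have h1 : ∀ i : Fin n, |f i ^ a| ^ (b / a) = f i ^ b := by
    intro i
    rw [abs_of_nonneg (Real.rpow_nonneg (hf i) a), ← Real.rpow_mul (hf i)]
    congr 1
    field_simp <;> ring
  have h2 : (∑ i : Fin n, (1 : ℝ) ^ (b / (b - a))) = (n : ℝ) := by
    simp
  rw [Finset.sum_congr rfl (fun i _ => h1 i), h2] at H
  -- H : ∑ f^a ≤ (∑ f^b)^(a/b) * n^((b-a)/b)
  have hsum_b : 0 ≤ ∑ i, f i ^ b := Finset.sum_nonneg fun i _ => Real.rpow_nonneg (hf i) b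
  have hsum_a : 0 ≤ ∑ i, f i ^ a := Finset.sum_nonneg fun i _ => Real.rpow_nonneg (hf i) a
  have key := Real.rpow_le_rpow hsum_a H (by positivity : (0:ℝ) ≤ 1 / a)
  refine key.trans_eq ?_
  have e1 : 1 / (b / a) * (1 / a) = 1 / b := by field_simp <;> ring
  have e2 : 1 / (b / (b - a)) * (1 / a) = 1 / a - 1 / b := by
    rw [one_div_div, div_mul_div_comm, mul_one, one_div, one_div, inv_sub_inv ha.ne' hb.ne',
      mul_comm a b]
  rw [Real.mul_rpow (Real.rpow_nonneg hsum_b _) (Real.rpow_nonneg (Nat.cast_nonneg n) _),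
    ← Real.rpow_mul hsum_b, ← Real.rpow_mul (Nat.cast_nonneg n), mul_comm, e1, e2]

lemma weakNorm_nonneg (𝕜 : Type*) [RCLike 𝕜] {E : Type*} [NormedAddCommGroup E]
    [NormedSpace 𝕜 E] {n : ℕ} (x : Fin n → E) {q : ℝ} (hq : 0 < q) :
    0 ≤ weakNorm 𝕜 x q := by
  have h0 : (0 : ℝ) ∈ {r : ℝ | ∃ φ : E →L[𝕜] 𝕜, ‖φ‖ ≤ 1 ∧
      r = (∑ k, ‖φ (x k)‖ ^ q) ^ (1 / q)} := by
    refine ⟨0, by simp, ?_⟩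
    simp [Real.zero_rpow hq.ne', Real.zero_rpow (one_div_ne_zero hq.ne'), Real.zero_rpow (inv_ne_zero hq.ne')]
  have hbdd : BddAbove {r : ℝ | ∃ φ : E →L[𝕜] 𝕜, ‖φ‖ ≤ 1 ∧
      r = (∑ k, ‖φ (x k)‖ ^ q) ^ (1 / q)} := by
    refine ⟨(∑ k, ‖x k‖ ^ q) ^ (1 / q), ?_⟩
    rintro r ⟨φ, hφ, rfl⟩
    refine Real.rpow_le_rpow (Finset.sum_nonneg fun k _ => Real.rpow_nonneg (norm_nonneg _) _)
      (Finset.sum_le_sum fun k _ => ?_) (by positivity)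
    exact Real.rpow_le_rpow (norm_nonneg _)
      ((φ.le_opNorm _).trans (by nlinarith [norm_nonneg (x k), φ.opNorm_nonneg])) hq.le
  exact le_csSup hbdd h0

lemma weakNorm_bddAbove (𝕜 : Type*) [RCLike 𝕜] {E : Type*} [NormedAddCommGroup E]
    [NormedSpace 𝕜 E] {n : ℕ} (x : Fin n → E) {q : ℝ} (hq : 0 < q) :
    BddAbove {r : ℝ | ∃ φ : E →L[𝕜] 𝕜, ‖φ‖ ≤ 1 ∧ r = (∑ k, ‖φ (x k)‖ ^ q) ^ (1 / q)} := by
  refine ⟨(∑ k, ‖x k‖ ^ q) ^ (1 / q), ?_⟩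
  rintro r ⟨φ, hφ, rfl⟩
  refine Real.rpow_le_rpow (Finset.sum_nonneg fun k _ => Real.rpow_nonneg (norm_nonneg _) _)
    (Finset.sum_le_sum fun k _ => ?_) (by positivity)
  exact Real.rpow_le_rpow (norm_nonneg _)
    ((φ.le_opNorm _).trans (by nlinarith [norm_nonneg (x k), φ.opNorm_nonneg])) hq.le

/-- `weakNorm s ≤ n^{1/s-1/q} weakNorm q` for `0 < s ≤ q`. -/
lemma weakNorm_le (𝕜 : Type*) [RCLike 𝕜] {E : Type*} [NormedAddCommGroup E]
    [NormedSpace 𝕜 E] {n : ℕ} (x : Fin n → E) {s q : ℝ} (hs : 0 < s) (hsq : s ≤ q) :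
    weakNorm 𝕜 x s ≤ (n : ℝ) ^ (1 / s - 1 / q) * weakNorm 𝕜 x q := by
  have hq : 0 < q := hs.trans_le hsq
  refine csSup_le ⟨0, 0, by simp,
    by simp [Real.zero_rpow hs.ne', Real.zero_rpow (one_div_ne_zero hs.ne'), Real.zero_rpow (inv_ne_zero hs.ne')]⟩ ?_
  rintro r ⟨φ, hφ, rfl⟩
  have h1 : (∑ k, ‖φ (x k)‖ ^ s) ^ (1 / s)
      ≤ (n : ℝ) ^ (1 / s - 1 / q) * (∑ k, ‖φ (x k)‖ ^ q) ^ (1 / q) :=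
    sum_rpow_root_le _ (fun i => norm_nonneg _) hs hsq
  refine h1.trans (mul_le_mul_of_nonneg_left ?_ (by positivity))
  exact le_csSup (weakNorm_bddAbove 𝕜 x hq) ⟨φ, hφ, rfl⟩

theorem stmt4 {𝕜 : Type*} [RCLike 𝕜] {m : ℕ} (hm : 1 ≤ m)
    {E : Type*} [NormedAddCommGroup E] [NormedSpace 𝕜 E] [CompleteSpace E]
    {F : Type*} [NormedAddCommGroup F] [NormedSpace 𝕜 F] [CompleteSpace F]
    {s q p t : ℝ} (hs : 1 ≤ s) (hsq : s ≤ q) (hp : 0 < p) (hpt : p ≤ t)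
    {C : ℝ} (hC : 0 ≤ C)
    (P : E → F)
    (hP : ∃ T : ContinuousMultilinearMap 𝕜 (fun _ : Fin m => E) F,
      ∀ x : E, P x = T (fun _ => x))
    (hsum : ∀ (n : ℕ), 0 < n → ∀ x : Fin n → E,
      (∑ k, ‖P (x k)‖ ^ t) ^ (1 / t) ≤ C * (weakNorm 𝕜 x s) ^ m) :
    ∀ (n : ℕ), 0 < n → ∀ x : Fin n → E,
      (∑ j, ‖P (x j)‖ ^ p) ^ (1 / p)
        ≤ C * (n : ℝ) ^ (1 / p - 1 / t + (m : ℝ) / s - m / q) * (weakNorm 𝕜 x q) ^ m := by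
  intro n hn x
  have hs0 : (0:ℝ) < s := lt_of_lt_of_le one_pos hs
  have hq0 : (0:ℝ) < q := hs0.trans_le hsq
  have hn0 : (0:ℝ) < (n:ℝ) := Nat.cast_pos.mpr hn
  have step1 : (∑ j, ‖P (x j)‖ ^ p) ^ (1 / p)
      ≤ (n : ℝ) ^ (1 / p - 1 / t) * (∑ k, ‖P (x k)‖ ^ t) ^ (1 / t) :=
    sum_rpow_root_le _ (fun i => norm_nonneg _) hp hpt
  have step2 := hsum n hn x
  have hwq : 0 ≤ weakNorm 𝕜 x q := weakNorm_nonneg 𝕜 x hq0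
  have hws : 0 ≤ weakNorm 𝕜 x s := weakNorm_nonneg 𝕜 x hs0
  have step3 : (weakNorm 𝕜 x s) ^ m
      ≤ ((n : ℝ) ^ (1 / s - 1 / q) * weakNorm 𝕜 x q) ^ m :=
    pow_le_pow_left₀ hws (weakNorm_le 𝕜 x hs0 hsq) m
  have hprod : ((n : ℝ) ^ (1 / s - 1 / q) * weakNorm 𝕜 x q) ^ m
      = (n : ℝ) ^ ((m : ℝ) / s - m / q) * (weakNorm 𝕜 x q) ^ m := by
    rw [mul_pow, ← Real.rpow_natCast ((n:ℝ) ^ (1 / s - 1 / q)), ← Real.rpow_mul hn0.le]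
    congr 2
    ring
  calc (∑ j, ‖P (x j)‖ ^ p) ^ (1 / p)
      ≤ (n : ℝ) ^ (1 / p - 1 / t) * (∑ k, ‖P (x k)‖ ^ t) ^ (1 / t) := step1
    _ ≤ (n : ℝ) ^ (1 / p - 1 / t) * (C * (weakNorm 𝕜 x s) ^ m) :=
        mul_le_mul_of_nonneg_left step2 (by positivity)
    _ ≤ (n : ℝ) ^ (1 / p - 1 / t) *
        (C * ((n : ℝ) ^ ((m : ℝ) / s - m / q) * (weakNorm 𝕜 x q) ^ m)) := by
        refine mul_le_mul_of_nonneg_left (mul_le_mul_of_nonneg_left ?_ hC) (by positivity)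
        rw [← hprod]; exact step3
    _ = C * (n : ℝ) ^ (1 / p - 1 / t + (m : ℝ) / s - m / q) * (weakNorm 𝕜 x q) ^ m := by
        rw [show 1 / p - 1 / t + (m : ℝ) / s - m / q
          = (1 / p - 1 / t) + ((m : ℝ) / s - m / q) by ring,
          Real.rpow_add hn0]
        ring
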